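/- Let Γ be a finite graph with m ≥ 3 vertices and vertex degrees d_1 ≤ d_2 ≤ ⋯ ≤ d_m. If for every k with 1 ≤ k < m/2 one has d_k ≥ k+1 or d_{m−k} ≥ m−k, then Γ contains a Hamiltonian cycle (Chvátal's criterion). -/

import Mathlib

/-- The vertex degree of `x` in a graph `Γ`. -/
noncomputable def vertexDegree {V : Type*} (Γ : SimpleGraph V) (x : V) : ℕ :=
  (Γ.neighborSet x).ncard

namespace ChvatalAux
open SimpleGraph List
open scoped Classical
variable {V : Type*} [Fintype V] [DecidableEq V]


def HamList (G : SimpleGraph V) (l : List V) : Prop :=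
  l.Nodup ∧ (∀ x : V, x ∈ l) ∧ l.IsChain G.Adj

def HamCyc (G : SimpleGraph V) (l : List V) : Prop :=
  HamList G l ∧ ∃ h : l ≠ [], G.Adj (l.getLast h) (l.head h)

lemma hamList_length {G : SimpleGraph V} {l : List V} (h : HamList G l) :
    l.length = Fintype.card V := by
  classical
  have : l.toFinset = Finset.univ := Finset.eq_univ_iff_forall.mpr (by simp [h.2.1])
  rw [← List.toFinset_card_of_nodup h.1, this, Finset.card_univ]

def mkWalk (G : SimpleGraph V) : (a : V) → (l : List V) → List.IsChain G.Adj (a :: l) →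
    G.Walk a ((a :: l).getLast (List.cons_ne_nil a l))
  | _, [], _ => SimpleGraph.Walk.nil
  | _, _ :: t, h =>
      SimpleGraph.Walk.cons (List.isChain_cons_cons.mp h).1 (mkWalk G _ t (List.isChain_cons_cons.mp h).2)

omit [Fintype V] [DecidableEq V] in
lemma support_mkWalk (G : SimpleGraph V) (a : V) (l : List V) (h : List.IsChain G.Adj (a :: l)) :
    (mkWalk G a l h).support = a :: l := by
  induction l generalizing a with
  | nil => rfl
  | cons b t ih => simp [mkWalk, ih]

omit [Fintype V] [DecidableEq V] in
lemma exists_consec_of_mem_edges {G : SimpleGraph V} {x y u v : V} (p : G.Walk x y)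
    (h : s(u, v) ∈ p.edges) :
    ∃ l₁ l₂, p.support = l₁ ++ u :: v :: l₂ ∨ p.support = l₁ ++ v :: u :: l₂ := by
  induction p with
  | nil => simp at h
  | @cons a b c hadj q ih =>
    rw [SimpleGraph.Walk.edges_cons, List.mem_cons] at h
    rcases h with h | h
    · rw [Sym2.eq_iff] at h
      rcases h with ⟨hu, hv⟩ | ⟨hu, hv⟩
      · exact ⟨[], q.support.tail, Or.inl (by
          rw [SimpleGraph.Walk.support_cons, q.support_eq_cons, hu, hv]; rfl)⟩
      · exact ⟨[], q.support.tail, Or.inr (by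
          rw [SimpleGraph.Walk.support_cons, q.support_eq_cons, hu, hv]; rfl)⟩
    · obtain ⟨l₁, l₂, hc⟩ := ih h
      exact ⟨a :: l₁, l₂, by
        rcases hc with hc | hc
        · exact Or.inl (by rw [SimpleGraph.Walk.support_cons, hc]; rfl)
        · exact Or.inr (by rw [SimpleGraph.Walk.support_cons, hc]; rfl)⟩



lemma hamCyc_to_cycle {G : SimpleGraph V} {l : List V} (hl : HamCyc G l)
    (h3 : 3 ≤ l.length) : ∃ (v : V) (w : G.Walk v v), w.IsHamiltonianCycle := by
  obtain ⟨⟨hnd, hmem, hch⟩, hne, hadj⟩ := hl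
  match l, h3, hnd, hmem, hch, hne, hadj with
  | a :: b :: t, h3, hnd, hmem, hch, hne, hadj => ?_
  have ht : t ≠ [] := by
    intro h; subst h; simp at h3
  have hab : G.Adj a b := (List.isChain_cons_cons.mp hch).1
  have hbt : List.IsChain G.Adj (b :: t) := (List.isChain_cons_cons.mp hch).2
  have hlast : (a :: b :: t).getLast hne = (b :: t).getLast (List.cons_ne_nil b t) :=
    List.getLast_cons _
  have hwrap : G.Adj ((b :: t).getLast (List.cons_ne_nil b t)) a := by
    rw [← hlast]; exact hadj
  have hS : List.IsChain G.Adj ((b :: t) ++ [a]) := by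
    refine List.IsChain.append hbt (List.isChain_singleton a) ?_
    intro x hx y hy
    rw [List.getLast?_eq_getLast (List.cons_ne_nil b t)] at hx
    simp at hx hy
    rw [← hx, ← hy]; exact hwrap
  have hchain : List.IsChain G.Adj (b :: (t ++ [a])) := hS
  have hend : ((b :: (t ++ [a])).getLast (List.cons_ne_nil _ _)) = a :=
    List.getLast_append_of_right_ne_nil (b :: t) [a] (by simp)
  let p : G.Walk b a := (mkWalk G b (t ++ [a]) hchain).copy rfl hend
  have hsupp : p.support = b :: (t ++ [a]) := by
    simp [p, support_mkWalk]
  -- support of p is a permutation of l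
  have hperm : p.support.Perm (a :: b :: t) := by
    rw [hsupp, show b :: (t ++ [a]) = (b :: t) ++ [a] from rfl]
    exact (List.perm_append_comm).trans (by rfl)
  have hndp : p.support.Nodup := hperm.nodup_iff.mpr hnd
  have hpath : p.IsPath := (SimpleGraph.Walk.isPath_def p).mpr hndp
  have hnotmem : s(a, b) ∉ p.edges := by
    intro hmem'
    obtain ⟨l₁, l₂, hc⟩ := exists_consec_of_mem_edges p hmem'
    have hlastp : p.support.getLast (by rw [hsupp]; simp) = a := by
      have h0 : p.support = (b :: t) ++ [a] := hsupp
      rw [List.getLast_congr _ _ h0]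
      exact List.getLast_append_of_right_ne_nil (b :: t) [a] (by simp)
    rcases hc with hc | hc
    · -- support = l₁ ++ a :: b :: l₂ : a is followed by something, but a is last
      have h1 : p.support = (l₁ ++ [a]) ++ (b :: l₂) := by rw [hc]; simp
      have hdisj := (List.nodup_append.mp (h1 ▸ hndp)).2.2
      have hga : p.support.getLast (by rw [hsupp]; simp) ∈ b :: l₂ := by
        rw [List.getLast_congr _ (by simp) h1, List.getLast_append_of_right_ne_nil _ _ (by simp)]
        exact List.getLast_mem _
      rw [hlastp] at hga
      exact hdisj _ (by simp) _ hga rfl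
    · -- support = l₁ ++ b :: a :: l₂
      rcases List.eq_nil_or_concat l₂ with rfl | ⟨l₂', z, rfl⟩
      · -- l₂ = [] : support = l₁ ++ [b, a]
        rcases l₁ with _ | ⟨c, l₁'⟩
        · -- support = [b, a], too short
          have hlen := congrArg List.length hc
          rw [hsupp] at hlen
          simp at hlen
          exact ht hlen
        · -- head is c = b, but b also occurs later
          have hh1 : p.support.head? = some b := by rw [hsupp]; rfl
          have hh2 : p.support.head? = some c := by rw [hc]; rfl
          have hcb : b = c := by rw [hh1] at hh2; exact Option.some.inj hh2
          have h1 : p.support = (c :: l₁') ++ (b :: [a]) := by rw [hc]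
          have hdisj := (List.nodup_append.mp (h1 ▸ hndp)).2.2
          exact hdisj _ (show b ∈ c :: l₁' by rw [hcb]; simp) _ (by simp) rfl
      · -- l₂ = l₂' ++ [z] : a occurs strictly before the last element, but a is last
        have h1 : p.support = (l₁ ++ b :: a :: l₂') ++ [z] := by rw [hc]; simp
        have hlastz : p.support.getLast (by rw [hsupp]; simp) = z := by
          rw [List.getLast_congr _ (by simp) h1]
          exact List.getLast_append_of_right_ne_nil _ _ (by simp)
        have hza : z = a := by rw [← hlastz, hlastp]
        subst hza
        have hdisj := (List.nodup_append.mp (h1 ▸ hndp)).2.2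
        exact hdisj _ (show z ∈ l₁ ++ b :: z :: l₂' by simp) _ (by simp) rfl
  let c : G.Walk a a := SimpleGraph.Walk.cons hab p
  refine ⟨a, c, ?_⟩
  rw [SimpleGraph.Walk.isHamiltonianCycle_iff_isCycle_and_support_count_tail_eq_one]
  constructor
  · exact (SimpleGraph.Walk.cons_isCycle_iff p hab).mpr ⟨hpath, hnotmem⟩
  · intro x
    have : c.support.tail = p.support := by simp [c]
    rw [this]
    exact List.count_eq_one_of_mem hndp (hperm.mem_iff.mpr (by simp [hmem x]))

lemma cycle_to_hamCyc {G : SimpleGraph V} {v : V} {w : G.Walk v v}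
    (hw : w.IsHamiltonianCycle) : ∃ l, HamCyc G l := by
  classical
  have hnn : ¬ w.Nil := hw.isCycle.not_nil
  have hTnd : w.support.tail.Nodup := hw.isCycle.support_nodup
  have hT1 : ∀ x : V, w.support.tail.count x = 1 := by
    intro x
    have := hw.isHamiltonian_tail x
    rwa [SimpleGraph.Walk.support_tail_of_not_nil w hnn] at this
  have hTmem : ∀ x : V, x ∈ w.support.tail := fun x =>
    List.count_pos_iff.mp (by rw [hT1 x]; norm_num)
  have hSne : w.support ≠ [] := w.support_ne_nil
  have hTne : w.support.tail ≠ [] := by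
    intro h
    have := hTmem v
    rw [h] at this
    simp at this
  have hScons : w.support = v :: w.support.tail := w.support_eq_cons
  have hSlast : w.support.getLast hSne = v := w.getLast_support
  have hTlast : w.support.tail.getLast hTne = v := by
    have h1 := List.getLast_congr hSne (List.cons_ne_nil v _) hScons
    rw [List.getLast_cons hTne] at h1
    rw [← h1, hSlast]
  -- T = T.dropLast ++ [v]
  have hTsplit : w.support.tail = w.support.tail.dropLast ++ [v] := by
    conv_lhs => rw [← List.dropLast_append_getLast hTne]
    rw [hTlast]
  set l : List V := v :: w.support.tail.dropLast with hl
  have hSsplit : w.support = l ++ [v] := by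
    rw [hScons]
    conv_lhs => rw [hTsplit]
    rfl
  have hvd : v ∉ w.support.tail.dropLast := by
    intro hmem
    have : w.support.tail.Nodup := hTnd
    rw [hTsplit] at this
    exact (List.nodup_append.mp this).2.2 _ hmem _ (by simp) rfl
  refine ⟨l, ⟨⟨?_, ?_, ?_⟩, ?_, ?_⟩⟩
  · exact List.nodup_cons.mpr ⟨hvd, hTnd.sublist (List.dropLast_sublist _)⟩
  · intro x
    by_cases hx : x = v
    · rw [hx]; simp [hl]
    · have hxT := hTmem x
      rw [hTsplit] at hxT
      rcases List.mem_append.mp hxT with h | h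
      · exact List.mem_cons_of_mem _ h
      · simp at h; exact absurd h hx
  · have hch := w.isChain_adj_support
    rw [hSsplit] at hch
    exact hch.prefix (List.prefix_append l [v])
  · simp [hl]
  · have hch := w.isChain_adj_support
    rw [hSsplit] at hch
    obtain ⟨-, -, hjunc⟩ := List.isChain_append.mp hch
    have := hjunc (l.getLast (by simp [hl]))
      (by rw [List.getLast?_eq_getLast (show l ≠ [] by simp [hl])]; exact Option.mem_some_iff.mpr rfl)
      v (Option.mem_some_iff.mpr rfl)
    simpa [hl] using this

omit [Fintype V] [DecidableEq V] in
lemma chain'_imp_mem {R S : V → V → Prop} {l : List V} (h : List.IsChain R l)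
    (himp : ∀ a b, a ∈ l → b ∈ l → R a b → S a b) : List.IsChain S l := by
  induction l with
  | nil => exact List.IsChain.nil
  | cons a t ih =>
    cases t with
    | nil => exact List.isChain_singleton a
    | cons b t' =>
      rw [List.isChain_cons_cons] at h ⊢
      exact ⟨himp a b (by simp) (by simp) h.1,
        ih h.2 (fun x y hx hy => himp x y (List.mem_cons_of_mem _ hx) (List.mem_cons_of_mem _ hy))⟩

omit [Fintype V] in
lemma hamCyc_rotate_one {G : SimpleGraph V} {l : List V} (h : HamCyc G l) :
    HamCyc G (l.rotate 1) := by
  obtain ⟨⟨hnd, hmem, hch⟩, hne, hadj⟩ := h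
  match l, hnd, hmem, hch, hne, hadj with
  | a :: t, hnd, hmem, hch, hne, hadj => ?_
  have ht : t ≠ [] := by
    rintro rfl
    exact G.loopless.irrefl a (by simpa using hadj)
  have hrot : (a :: t).rotate 1 = t ++ [a] := by
    rw [List.rotate_cons_succ, List.rotate_zero]
  rw [hrot]
  have hperm : (t ++ [a]).Perm (a :: t) := List.perm_append_comm.trans (by rfl)
  have hwrap : G.Adj (t.getLast ht) a := by
    rw [← List.getLast_cons (l := t) ht]
    exact hadj
  obtain ⟨b, t', rfl⟩ := List.exists_cons_of_ne_nil ht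
  refine ⟨⟨hperm.nodup_iff.mpr hnd, fun x => hperm.mem_iff.mpr (by simp [hmem x]), ?_⟩, by simp, ?_⟩
  · refine List.IsChain.append (List.isChain_cons_cons.mp hch).2 (List.isChain_singleton a) ?_
    intro x hx y hy
    rw [List.getLast?_eq_getLast (by simp), Option.mem_some_iff] at hx
    rw [List.head?_cons, Option.mem_some_iff] at hy
    rw [← hx, ← hy]
    exact hwrap
  · have h1 : ((b :: t') ++ [a]).getLast (by simp) = a := List.getLast_append_of_right_ne_nil _ _ (by simp)
    have h2 : ((b :: t') ++ [a]).head (by simp) = b := rfl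
    rw [h1, h2]
    exact (List.isChain_cons_cons.mp hch).1

omit [Fintype V] in
lemma hamCyc_rotate {G : SimpleGraph V} {l : List V} (h : HamCyc G l) (n : ℕ) :
    HamCyc G (l.rotate n) := by
  induction n with
  | zero => simpa using h
  | succ n ih =>
    have : l.rotate (n + 1) = (l.rotate n).rotate 1 := by
      rw [List.rotate_rotate]
    rw [this]
    exact hamCyc_rotate_one ih

lemma extract_path {G : SimpleGraph V} (hm : 3 ≤ Fintype.card V)
    (hNH : ¬ ∃ l, HamCyc G l) {u v : V} (huv : u ≠ v)
    (hc : ∃ c, HamCyc (G ⊔ SimpleGraph.fromEdgeSet {s(u, v)}) c) :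
    ∃ p : List V, HamList G p ∧
      ((p.head? = some u ∧ p.getLast? = some v) ∨
       (p.head? = some v ∧ p.getLast? = some u)) := by
  classical
  set H := G ⊔ SimpleGraph.fromEdgeSet {s(u, v)} with hH
  obtain ⟨c, hc⟩ := hc
  -- rotate so that `u` is at the head
  obtain ⟨i, hi, hget⟩ := List.mem_iff_getElem.mp (hc.1.2.1 u)
  have hc' := hamCyc_rotate hc i
  set c' := c.rotate i with hc'def
  have hhead : c'.head? = some u := by
    rw [hc'def, List.rotate_eq_drop_append_take (le_of_lt hi),
      List.head?_append_of_ne_nil (c.drop i) (by rw [Ne, List.drop_eq_nil_iff]; omega)]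
    rw [List.head?_drop, List.getElem?_eq_getElem hi, hget]
  have hlen : c'.length = Fintype.card V := by
    rw [hc'def, List.length_rotate]
    exact hamList_length hc.1
  obtain ⟨⟨hnd, hmem, hch⟩, hne, hadj⟩ := hc'
  -- decompose c' = u :: w :: rest'
  obtain ⟨u', rest, hdecomp⟩ := List.exists_cons_of_ne_nil hne
  have hu' : u' = u := by
    rw [hdecomp] at hhead
    simpa using hhead
  rw [hu'] at hdecomp
  clear hu'
  have hadjfix : H.Adj ((u :: rest).getLast (List.cons_ne_nil _ _)) u := by
    have h1 : c'.getLast hne = (u :: rest).getLast (List.cons_ne_nil _ _) :=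
      List.getLast_congr _ _ hdecomp
    have h2 : c'.head hne = u := by
      rw [List.head?_eq_head hne] at hhead
      exact Option.some.inj hhead
    rw [h1, h2] at hadj
    exact hadj
  rw [hdecomp] at hnd hmem hch hlen
  have hrestlen : rest.length + 1 = Fintype.card V := by simpa using hlen
  obtain ⟨w, rest', hrest⟩ := List.exists_cons_of_ne_nil
    (show rest ≠ [] by intro h; rw [h] at hrestlen; simp at hrestlen; omega)
  have hunotin : u ∉ rest := (List.nodup_cons.mp hnd).1
  have hndrest : rest.Nodup := (List.nodup_cons.mp hnd).2
  -- H-edges inside `rest` are G-edges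
  have hK : ∀ x y, x ∈ rest → y ∈ rest → H.Adj x y → G.Adj x y := by
    intro x y hx hy hxy
    rcases (SimpleGraph.sup_adj _ _ _ _).mp hxy with h | h
    · exact h
    · exfalso
      have := (SimpleGraph.fromEdgeSet_adj _).mp h
      rw [Set.mem_singleton_iff, Sym2.eq_iff] at this
      rcases this.1 with ⟨rfl, rfl⟩ | ⟨rfl, rfl⟩
      · exact hunotin hx
      · exact hunotin hy
  have hchrest : List.IsChain H.Adj rest := (List.isChain_cons.mp hch).2
  have hchrestG : List.IsChain G.Adj rest := chain'_imp_mem hchrest (hK)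
  have hadjuw : H.Adj u w := by
    rw [hrest] at hch
    exact (List.isChain_cons_cons.mp hch).1
  have hgetlast : (u :: rest).getLast (List.cons_ne_nil _ _) =
      rest.getLast (by rw [hrest]; simp) := List.getLast_cons _
  have hlastmem : rest.getLast (by rw [hrest]; simp) ∈ rest := List.getLast_mem _
  have hadjlast : H.Adj (rest.getLast (by rw [hrest]; simp)) u := by
    rw [← hgetlast]
    exact hadjfix
  have hlastne : rest.getLast (by rw [hrest]; simp) ≠ u := by
    intro h; exact hunotin (h ▸ hlastmem)
  by_cases hA : G.Adj u w
  · have hchG : List.IsChain G.Adj (u :: rest) := by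
      rw [hrest]
      rw [hrest] at hchrestG
      exact List.isChain_cons_cons.mpr ⟨hA, hchrestG⟩
    by_cases hB : G.Adj (rest.getLast (by rw [hrest]; simp)) u
    · exfalso
      apply hNH
      refine ⟨u :: rest, ⟨hnd, hmem, hchG⟩, List.cons_ne_nil _ _, ?_⟩
      rw [hgetlast]
      exact hB
    · -- last of rest must be v
      have : rest.getLast (by rw [hrest]; simp) = v := by
        rcases (SimpleGraph.sup_adj _ _ _ _).mp hadjlast with h | h
        · exact absurd h hB
        · have := (SimpleGraph.fromEdgeSet_adj _).mp h
          rw [Set.mem_singleton_iff, Sym2.eq_iff] at this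
          rcases this.1 with ⟨h1, h2⟩ | ⟨h1, h2⟩
          · exact absurd h1 hlastne
          · exact h1
      refine ⟨u :: rest, ⟨hnd, hmem, hchG⟩, Or.inl ⟨rfl, ?_⟩⟩
      rw [List.getLast?_eq_getLast (List.cons_ne_nil _ _), hgetlast, this]
  · -- w = v
    have hwv : w = v := by
      rcases (SimpleGraph.sup_adj _ _ _ _).mp hadjuw with h | h
      · exact absurd h hA
      · have := (SimpleGraph.fromEdgeSet_adj _).mp h
        rw [Set.mem_singleton_iff, Sym2.eq_iff] at this
        rcases this.1 with ⟨h1, h2⟩ | ⟨h1, h2⟩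
        · exact h2
        · exact absurd h1 huv
    have hB : G.Adj (rest.getLast (by rw [hrest]; simp)) u := by
      rcases (SimpleGraph.sup_adj _ _ _ _).mp hadjlast with h | h
      · exact h
      · exfalso
        have := (SimpleGraph.fromEdgeSet_adj _).mp h
        rw [Set.mem_singleton_iff, Sym2.eq_iff] at this
        rcases this.1 with ⟨h1, h2⟩ | ⟨h1, h2⟩
        · exact hlastne h1
        · -- getLast rest = v = w, so rest = [w], contradiction with length
          rw [hrest] at hndrest
          have hgl : rest.getLast (by rw [hrest]; simp) = w := by rw [h1, ← hwv]
          rcases List.eq_nil_or_concat rest' with rfl | ⟨l₂, z, rfl⟩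
          · rw [hrest] at hrestlen; simp at hrestlen; omega
          · have heq : rest = (w :: l₂) ++ [z] := by rw [hrest]; simp
            have hz : rest.getLast (by rw [hrest]; simp) = z := by
              rw [List.getLast_congr _ (by simp) heq]
              exact List.getLast_append_of_right_ne_nil _ _ (by simp)
            rw [hgl] at hz
            have hwmem : w ∈ l₂.concat z := by simp [← hz]
            exact (List.nodup_cons.mp hndrest).1 hwmem
    refine ⟨rest ++ [u], ⟨?_, ?_, ?_⟩, Or.inr ⟨?_, ?_⟩⟩
    · rw [List.nodup_append]
      exact ⟨hndrest, List.nodup_singleton u, by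
        intro x hx y hy hxy
        simp at hy
        exact hunotin (hy ▸ hxy ▸ hx)⟩
    · intro x
      have := hmem x
      rw [List.mem_cons] at this
      rcases this with rfl | hx
      · simp
      · exact List.mem_append.mpr (Or.inl hx)
    · refine List.IsChain.append hchrestG (List.isChain_singleton u) ?_
      intro x hx y hy
      rw [List.getLast?_eq_getLast (by rw [hrest]; simp), Option.mem_some_iff] at hx
      rw [List.head?_cons, Option.mem_some_iff] at hy
      rw [← hx, ← hy]
      exact hB
    · rw [List.head?_append_of_ne_nil _ (by rw [hrest]; simp), hrest, List.head?_cons, hwv]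
    · rw [List.getLast?_concat]

lemma degree_filter {G : SimpleGraph V} {p : List V} (hp : HamList G p) (x : V) :
    (Finset.univ.filter fun i : Fin p.length => G.Adj x (p[i.val])).card
      = vertexDegree G x := by
  classical
  rw [vertexDegree, Set.ncard_eq_toFinset_card']
  apply Finset.card_bij (fun i _ => p[i.val])
  · intro i hi
    simp only [Finset.mem_filter] at hi
    simp [SimpleGraph.mem_neighborSet]
    exact hi.2
  · intro i hi j hj hij
    simp only [Fin.ext_iff]
    exact (hp.1.getElem_inj_iff.mp hij)
  · intro y hy
    obtain ⟨n, hn, hget⟩ := List.mem_iff_getElem.mp (hp.2.1 y)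
    refine ⟨⟨n, hn⟩, ?_, hget⟩
    simp only [Finset.mem_filter, Finset.mem_univ, true_and]
    rw [hget]
    simpa [SimpleGraph.mem_neighborSet] using hy

lemma no_long_path {G : SimpleGraph V} (hNH : ¬ ∃ l, HamCyc G l)
    {p : List V} (hp : HamList G p) {u v : V}
    (hu : p.head? = some u) (hv : p.getLast? = some v)
    (hadj : ¬G.Adj u v)
    (hsum : Fintype.card V ≤ vertexDegree G u + vertexDegree G v) : False := by
  classical
  set n := p.length with hn
  have hpne : p ≠ [] := by intro h; rw [h] at hu; simp at hu
  have hnpos : 0 < n := List.length_pos_iff.mpr hpne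
  have hp0 : p[0]'hnpos = u := by
    rw [List.getElem_zero hnpos, List.head?_eq_head (List.length_pos_iff.mp hnpos)] at *
    exact Option.some.inj hu
  have hplast : p[n - 1]'(by omega) = v := by
    rw [← List.getLast_eq_getElem hpne]
    rw [List.getLast?_eq_getLast hpne] at hv
    exact Option.some.inj hv
  set S := Finset.univ.filter (fun i : Fin n => G.Adj u (p[i.val])) with hS
  set T := Finset.univ.filter
    (fun i : Fin n => 0 < i.val ∧ G.Adj v (p[i.val - 1]'(by omega))) with hT
  have hcardS : S.card = vertexDegree G u := degree_filter hp u
  have hcardT : T.card = vertexDegree G v := by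
    rw [← degree_filter hp v]
    apply Finset.card_bij (fun (i : Fin n) (_ : i ∈ T) => (⟨i.val - 1, by have := i.isLt; omega⟩ : Fin n))
    · intro i hi
      simp only [hT, Finset.mem_filter, Finset.mem_univ, true_and] at hi
      simp only [Finset.mem_filter, Finset.mem_univ, true_and]
      exact hi.2
    · intro i hi j hj hij
      simp only [hT, Finset.mem_filter, Finset.mem_univ, true_and] at hi hj
      simp only [Fin.ext_iff] at hij ⊢
      omega
    · intro j hj
      simp only [Finset.mem_filter, Finset.mem_univ, true_and] at hj
      have hjlt : j.val < n - 1 := by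
        rcases Nat.lt_or_ge j.val (n - 1) with h | h
        · exact h
        · exfalso
          have : j.val = n - 1 := by omega
          rw [show p[j.val] = p[n-1]'(by omega) by congr 1] at hj
          rw [hplast] at hj
          exact G.loopless.irrefl v hj
      refine ⟨⟨j.val + 1, by omega⟩, ?_, ?_⟩
      · simp only [hT, Finset.mem_filter, Finset.mem_univ, true_and]
        constructor
        · omega
        · simpa using hj
      · simp only [Fin.ext_iff]
        omega
  have hS0 : ∀ i ∈ S, 0 < i.val := by
    intro i hi
    simp only [hS, Finset.mem_filter, Finset.mem_univ, true_and] at hi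
    rcases Nat.eq_zero_or_pos i.val with h | h
    · exfalso
      rw [show p[i.val] = p[0]'hnpos by congr 1, hp0] at hi
      exact G.loopless.irrefl u hi
    · exact h
  have hsub : S ∪ T ⊆ Finset.univ.filter (fun i : Fin n => 0 < i.val) := by
    intro i hi
    simp only [Finset.mem_filter, Finset.mem_univ, true_and]
    rcases Finset.mem_union.mp hi with h | h
    · exact hS0 i h
    · simp only [hT, Finset.mem_filter, Finset.mem_univ, true_and] at h
      exact h.1
  have hcard_filter : (Finset.univ.filter (fun i : Fin n => 0 < i.val)).card = n - 1 := by
    have : (Finset.univ.filter (fun i : Fin n => 0 < i.val))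
        = Finset.univ.erase (⟨0, hnpos⟩ : Fin n) := by
      ext i
      simp [Fin.ext_iff, Nat.pos_iff_ne_zero]
    rw [this, Finset.card_erase_of_mem (Finset.mem_univ _), Finset.card_univ, Fintype.card_fin]
  have hinter : (S ∩ T).Nonempty := by
    rw [← Finset.card_pos]
    have h1 : (S ∪ T).card ≤ n - 1 := hcard_filter ▸ Finset.card_le_card hsub
    have h2 := Finset.card_union_add_card_inter S T
    have h3 : n = Fintype.card V := hamList_length hp
    omega
  obtain ⟨i, hi⟩ := hinter
  rw [Finset.mem_inter, hS, hT] at hi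
  simp only [Finset.mem_filter, Finset.mem_univ, true_and] at hi
  obtain ⟨hiu, hipos, hiv⟩ := hi
  -- build the Hamiltonian cycle
  set q := p.take i.val ++ (p.drop i.val).reverse with hq
  have hdropne : p.drop i.val ≠ [] := by rw [Ne, List.drop_eq_nil_iff]; omega
  have hdroprevne : (p.drop i.val).reverse ≠ [] := by simpa using hdropne
  have htakene : p.take i.val ≠ [] := by
    rw [Ne, List.take_eq_nil_iff]
    push_neg
    exact ⟨by omega, hpne⟩
  have hperm : q.Perm p := by
    calc q ~ p.take i.val ++ p.drop i.val :=
          List.Perm.append_left _ (List.reverse_perm _)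
    _ = p := List.take_append_drop _ _
  apply hNH
  refine ⟨q, ⟨hperm.nodup_iff.mpr hp.1, fun x => hperm.mem_iff.mpr (hp.2.1 x), ?_⟩, ?_, ?_⟩
  · -- chain'
    refine List.IsChain.append (hp.2.2.take _) ?_ ?_
    · rw [List.isChain_reverse]
      exact (hp.2.2.drop _).imp (fun a b hab => hab.symm)
    · intro x hx y hy
      rw [List.getLast?_eq_getLast htakene, Option.mem_some_iff] at hx
      rw [List.head?_reverse, List.getLast?_eq_getLast hdropne, Option.mem_some_iff] at hy
      have hxval : x = p[i.val - 1]'(by omega) := by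
        rw [← hx, List.getLast_eq_getElem htakene]
        have hlt : (p.take i.val).length - 1 < (p.take i.val).length := by
          rw [List.length_take]
          omega
        rw [List.getElem_take]
        congr 1
        rw [List.length_take]
        omega
      have hyval : y = v := by
        rw [← hy, List.getLast_eq_getElem hdropne, List.getElem_drop]
        rw [← hplast]
        congr 1
        rw [List.length_drop]
        omega
      rw [hxval, hyval]
      exact hiv.symm
  · intro hnil
    exact htakene (List.append_eq_nil_iff.mp hnil).1
  · -- wrap adjacency
    have hqne : q ≠ [] := by
      intro hnil
      exact htakene (List.append_eq_nil_iff.mp hnil).1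
    have h1 : q.getLast hqne = p[i.val]'(i.isLt) := by
      rw [List.getLast_congr hqne (by simp [hdropne]) hq,
        List.getLast_append_of_right_ne_nil _ _ hdroprevne, List.getLast_reverse]
      rw [List.head_drop]
    have h2 : q.head hqne = u := by
      have hh : q.head? = some u := by
        rw [hq, List.head?_append_of_ne_nil _ htakene, List.head?_eq_head htakene,
          List.head_take htakene]
        rw [← List.head?_eq_head hpne]
        exact hu
      rw [List.head?_eq_head hqne] at hh
      exact Option.some.inj hh
    rw [h1, h2]
    exact hiu.symm

lemma vertexDegree_mono {G G' : SimpleGraph V} (h : G ≤ G') (x : V) :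
    vertexDegree G x ≤ vertexDegree G' x :=
  Set.ncard_le_ncard (fun _ ha => h ha) (Set.toFinite _)

lemma vertexDegree_eq_card_toFinset (G : SimpleGraph V) (x : V) :
    vertexDegree G x = (G.neighborSet x).toFinset.card :=
  Set.ncard_eq_toFinset_card' _

lemma complete_hamCyc (hm : 3 ≤ Fintype.card V) {G : SimpleGraph V}
    (hcomp : ∀ x y : V, x ≠ y → G.Adj x y) : ∃ l, HamCyc G l := by
  set l := Finset.univ.toList (α := V) with hl
  have hnd : l.Nodup := Finset.nodup_toList _
  have hmem : ∀ x : V, x ∈ l := by simp [hl, Finset.mem_toList]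
  have hlen : l.length = Fintype.card V := by
    rw [hl, Finset.length_toList, Finset.card_univ]
  have hne : l ≠ [] := by
    intro h; rw [h] at hlen; simp at hlen; omega
  refine ⟨l, ⟨hnd, hmem, ?_⟩, hne, ?_⟩
  · exact (List.Pairwise.isChain hnd).imp (fun a b hab => hcomp a b hab)
  · apply hcomp
    obtain ⟨a, t, hdec⟩ := List.exists_cons_of_ne_nil hne
    have htne : t ≠ [] := by
      intro h
      rw [hdec, h] at hlen
      simp at hlen
      omega
    have h1 : l.getLast hne = t.getLast htne := by
      rw [List.getLast_congr _ (by simp [hdec]) hdec]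
      exact List.getLast_cons htne
    have h2 : l.head hne = a := by
      have hh : l.head? = some a := by rw [hdec]; rfl
      rw [List.head?_eq_head hne] at hh
      exact Option.some.inj hh
    rw [h1, h2]
    intro hcontra
    have : a ∈ t := hcontra ▸ List.getLast_mem htne
    rw [hdec] at hnd
    exact (List.nodup_cons.mp hnd).1 this


/-- If at least `k` vertices have `Γ`-degree at most `K`, then the `k`-th smallest
degree is at most `K`. -/
lemma sorted_bound {Γ : SimpleGraph V} (e : Fin (Fintype.card V) ≃ V)
    (hmono : Monotone fun i => vertexDegree Γ (e i))
    {k K : ℕ} (hkpos : 0 < k) (hkm : k ≤ Fintype.card V)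
    (W : Finset V) (hWcard : k ≤ W.card) (hWdeg : ∀ w ∈ W, vertexDegree Γ w ≤ K) :
    vertexDegree Γ (e ⟨k - 1, by omega⟩) ≤ K := by
  by_contra hgt
  push_neg at hgt
  have hidx : ∀ w ∈ W, (e.symm w : ℕ) < k - 1 := by
    intro w hw
    by_contra hge
    push_neg at hge
    have hle : (⟨k - 1, by omega⟩ : Fin (Fintype.card V)) ≤ e.symm w := hge
    have := hmono hle
    simp only [Equiv.apply_symm_apply] at this
    have := le_trans (le_of_lt hgt) this
    have := hWdeg w hw
    omega
  have hcard1 : W.card = (W.image (fun w => e.symm w)).card :=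
    (Finset.card_image_of_injective W e.symm.injective).symm
  have hsub : (W.image (fun w => e.symm w)) ⊆
      Finset.univ.filter (fun i : Fin (Fintype.card V) => (i : ℕ) < k - 1) := by
    intro i hi
    obtain ⟨w, hw, rfl⟩ := Finset.mem_image.mp hi
    simp only [Finset.mem_filter, Finset.mem_univ, true_and]
    exact hidx w hw
  have hcard2 : (Finset.univ.filter
      (fun i : Fin (Fintype.card V) => (i : ℕ) < k - 1)).card ≤ k - 1 := by
    have := Finset.card_le_card_of_injOn (fun i : Fin (Fintype.card V) => (i : ℕ))
      (s := Finset.univ.filter (fun i : Fin (Fintype.card V) => (i : ℕ) < k - 1))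
      (t := Finset.range (k - 1))
      (by intro i hi
          simp only [Finset.coe_filter, Finset.mem_univ, true_and, Set.mem_setOf_eq] at hi
          simp [Finset.mem_range, hi])
      (by intro a _ b _ hab; exact Fin.ext hab)
    simpa using this
  have := (hcard1 ▸ hWcard).trans ((Finset.card_le_card hsub).trans hcard2)
  omega

lemma final_part (Γ G' : SimpleGraph V) (hm : 3 ≤ Fintype.card V)
    (e : Fin (Fintype.card V) ≃ V)
    (hmono : Monotone fun i => vertexDegree Γ (e i))
    (h : ∀ k : ℕ, ∀ _ : 1 ≤ k, ∀ _ : 2 * k < Fintype.card V,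
      vertexDegree Γ (e ⟨k - 1, by lia⟩) ≥ k + 1 ∨
      vertexDegree Γ (e ⟨Fintype.card V - k - 1, by lia⟩) ≥ Fintype.card V - k)
    (hΓG' : Γ ≤ G')
    (hsum : ∀ x y : V, x ≠ y → ¬G'.Adj x y →
      vertexDegree G' x + vertexDegree G' y < Fintype.card V)
    {u v : V}
    (hbest : ∀ x y : V, x ≠ y → ¬G'.Adj x y →
      vertexDegree G' x + vertexDegree G' y ≤ vertexDegree G' u + vertexDegree G' v)
    (huv : u ≠ v) (hnadj : ¬G'.Adj u v)
    (hduv : vertexDegree G' u ≤ vertexDegree G' v) : False := by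
  have hkv : vertexDegree G' u + vertexDegree G' v < Fintype.card V := hsum u v huv hnadj
  have h2k : 2 * vertexDegree G' u < Fintype.card V := by omega
  by_cases hk0 : vertexDegree G' u = 0
  · rcases h 1 le_rfl (by omega) with hca | hca
    · have hca' : 2 ≤ vertexDegree Γ (e ⟨0, by omega⟩) := hca
      have h1 : vertexDegree Γ u = 0 := by
        have := vertexDegree_mono hΓG' u
        omega
      have h2 := hmono (show (⟨0, by omega⟩ : Fin (Fintype.card V)) ≤ e.symm u from
        Fin.le_def.mpr (by simp))
      simp only [Equiv.apply_symm_apply] at h2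
      have h3 := le_trans hca' h2
      omega
    · set i₁ : Fin (Fintype.card V) := ⟨Fintype.card V - 1 - 1, by omega⟩ with hi₁
      set i₂ : Fin (Fintype.card V) := ⟨Fintype.card V - 1, by omega⟩ with hi₂
      have hd₁ : Fintype.card V - 1 ≤ vertexDegree Γ (e i₁) := hca
      have hd₂ : Fintype.card V - 1 ≤ vertexDegree Γ (e i₂) :=
        le_trans hd₁ (hmono (Fin.le_def.mpr (by simp [hi₁, hi₂])))
      have hwex : ∃ w, w ≠ u ∧ Fintype.card V - 1 ≤ vertexDegree Γ w := by
        by_cases he : e i₁ = u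
        · refine ⟨e i₂, ?_, hd₂⟩
          rw [← he]
          intro hh
          have := e.injective hh
          rw [Fin.ext_iff, hi₁, hi₂] at this
          simp at this
          omega
        · exact ⟨e i₁, he, hd₁⟩
      obtain ⟨w, hwne, hwdeg⟩ := hwex
      have hadjwu : Γ.Adj w u := by
        by_contra hno
        have hsub : (Γ.neighborSet w).toFinset ⊆ (Finset.univ.erase w).erase u := by
          intro x hx
          rw [Set.mem_toFinset, SimpleGraph.mem_neighborSet] at hx
          refine Finset.mem_erase.mpr ⟨?_, Finset.mem_erase.mpr ⟨?_, Finset.mem_univ _⟩⟩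
          · intro hh; rw [hh] at hx; exact hno hx
          · intro hh; rw [hh] at hx; exact Γ.loopless.irrefl w hx
        have hcards : ((Finset.univ.erase w).erase u).card = Fintype.card V - 1 - 1 := by
          rw [Finset.card_erase_of_mem (Finset.mem_erase.mpr ⟨Ne.symm hwne, Finset.mem_univ _⟩),
            Finset.card_erase_of_mem (Finset.mem_univ _), Finset.card_univ]
        have := Finset.card_le_card hsub
        rw [hcards, ← vertexDegree_eq_card_toFinset] at this
        omega
      have : 0 < vertexDegree G' u := by
        rw [vertexDegree]
        rw [Set.ncard_pos (Set.toFinite _)]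
        exact ⟨w, hΓG' hadjwu.symm⟩
      omega
  · have hk1 : 1 ≤ vertexDegree G' u := by omega
    -- the set of non-neighbours of v, other than v itself
    set W := Finset.univ.filter (fun w => ¬(w = v ∨ G'.Adj v w)) with hW
    have hWc : Finset.univ.filter (fun w => (w = v ∨ G'.Adj v w))
        = insert v (G'.neighborSet v).toFinset := by
      ext w
      simp [SimpleGraph.mem_neighborSet, eq_comm]
    have hWpc : (Finset.univ.filter (fun w => (w = v ∨ G'.Adj v w))).card
        = 1 + vertexDegree G' v := by
      rw [hWc, Finset.card_insert_of_notMem (by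
        rw [Set.mem_toFinset, SimpleGraph.mem_neighborSet]
        exact G'.loopless.irrefl v), ← vertexDegree_eq_card_toFinset]
      omega
    have hWcards := Finset.card_filter_add_card_filter_not
      (s := (Finset.univ : Finset V)) (p := fun w => (w = v ∨ G'.Adj v w))
    rw [Finset.card_univ, hWpc] at hWcards
    have hWk : vertexDegree G' u ≤ W.card := by
      rw [hW] at *
      omega
    have hWdeg : ∀ w ∈ W, vertexDegree Γ w ≤ vertexDegree G' u := by
      intro w hw
      simp only [hW, Finset.mem_filter, Finset.mem_univ, true_and] at hw
      push_neg at hw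
      obtain ⟨hwv, hwadj⟩ := hw
      have hG'w : vertexDegree G' w ≤ vertexDegree G' u := by
        by_cases hwu : w = u
        · rw [hwu]
        · have := hbest w v hwv (fun hh => hwadj hh.symm)
          omega
      exact le_trans (vertexDegree_mono hΓG' w) hG'w
    have hA := sorted_bound e hmono hk1 (by omega) W hWk hWdeg
    -- the set of non-neighbours of u, including u itself
    set U := Finset.univ.filter (fun w => ¬ G'.Adj u w) with hU
    have hUpc : (Finset.univ.filter (fun w => G'.Adj u w)).card = vertexDegree G' u := by
      rw [vertexDegree_eq_card_toFinset]
      congr 1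
      ext w
      simp [SimpleGraph.mem_neighborSet]
    have hUcards := Finset.card_filter_add_card_filter_not
      (s := (Finset.univ : Finset V)) (p := fun w => G'.Adj u w)
    rw [Finset.card_univ, hUpc] at hUcards
    have hUk : Fintype.card V - vertexDegree G' u ≤ U.card := by
      rw [hU] at *
      omega
    have hUdeg : ∀ w ∈ U, vertexDegree Γ w ≤ Fintype.card V - vertexDegree G' u - 1 := by
      intro w hw
      simp only [hU, Finset.mem_filter, Finset.mem_univ, true_and] at hw
      have hG'w : vertexDegree G' w ≤ Fintype.card V - vertexDegree G' u - 1 := by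
        by_cases hwu : w = u
        · rw [hwu]
          omega
        · have := hbest u w (fun hh => hwu hh.symm) hw
          omega
      exact le_trans (vertexDegree_mono hΓG' w) hG'w
    have hB := sorted_bound e hmono (k := Fintype.card V - vertexDegree G' u)
      (by omega) (by omega) U hUk hUdeg
    rcases h (vertexDegree G' u) hk1 h2k with hc | hc
    · have := le_trans hc hA
      omega
    · have := le_trans hc hB
      omega

end ChvatalAux

/-- Chvátal's criterion: if the degrees `d_1 ≤ ⋯ ≤ d_m` of a
finite graph on `m ≥ 3` vertices satisfy `d_k ≥ k + 1` or `d_{m−k} ≥ m − k` for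
every `1 ≤ k < m/2`, then the graph contains a Hamiltonian cycle. -/
theorem stmt_6 {V : Type*} [Fintype V] [DecidableEq V] (Γ : SimpleGraph V)
    (hm : 3 ≤ Fintype.card V)
    (e : Fin (Fintype.card V) ≃ V)
    (hmono : Monotone fun i => vertexDegree Γ (e i))
    (h : ∀ k : ℕ, ∀ _ : 1 ≤ k, ∀ _ : 2 * k < Fintype.card V,
      vertexDegree Γ (e ⟨k - 1, by omega⟩) ≥ k + 1 ∨
      vertexDegree Γ (e ⟨Fintype.card V - k - 1, by omega⟩) ≥ Fintype.card V - k) :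
    ∃ (v : V) (w : Γ.Walk v v), w.IsHamiltonianCycle := by
  classical
  open ChvatalAux in
  by_contra hcon
  have hNH0 : ¬ ∃ l, HamCyc Γ l := by
    rintro ⟨l, hl⟩
    exact hcon (hamCyc_to_cycle hl (by rw [hamList_length hl.1]; exact hm))
  obtain ⟨G', hleΓ, hmax⟩ := Finite.exists_le_maximal
    (p := fun H : SimpleGraph V => Γ ≤ H ∧ ¬ ∃ l, HamCyc H l) ⟨le_refl Γ, hNH0⟩
  obtain ⟨hΓG', hNH⟩ := hmax.prop
  have hadd : ∀ x y : V, x ≠ y → ¬G'.Adj x y →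
      ∃ c, HamCyc (G' ⊔ SimpleGraph.fromEdgeSet {s(x, y)}) c := by
    intro x y hxy hnadj
    by_contra hno
    have hHle : G' ≤ G' ⊔ SimpleGraph.fromEdgeSet {s(x, y)} := le_sup_left
    have hback := hmax.le_of_ge ⟨hΓG'.trans hHle, hno⟩ hHle
    have hadjH : (G' ⊔ SimpleGraph.fromEdgeSet {s(x, y)}).Adj x y :=
      (SimpleGraph.sup_adj _ _ _ _).mpr
        (Or.inr ((SimpleGraph.fromEdgeSet_adj _).mpr ⟨Set.mem_singleton _, hxy⟩))
    exact hnadj (hback hadjH)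
  have hsum : ∀ x y : V, x ≠ y → ¬G'.Adj x y →
      vertexDegree G' x + vertexDegree G' y < Fintype.card V := by
    intro x y hxy hnadj
    by_contra hge
    push_neg at hge
    obtain ⟨p, hp, hcase⟩ := extract_path hm hNH hxy (hadd x y hxy hnadj)
    rcases hcase with ⟨h1, h2⟩ | ⟨h1, h2⟩
    · exact no_long_path hNH hp h1 h2 hnadj (by omega)
    · exact no_long_path hNH hp h1 h2 (fun hh => hnadj hh.symm) (by omega)
  have hpair : ∃ x y : V, x ≠ y ∧ ¬G'.Adj x y := by
    by_contra hc
    push_neg at hc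
    exact hNH (complete_hamCyc hm hc)
  obtain ⟨x₀, y₀, hxy₀, hnadj₀⟩ := hpair
  set P : Finset (V × V) := Finset.univ.filter
    (fun q : V × V => q.1 ≠ q.2 ∧ ¬G'.Adj q.1 q.2) with hP
  have hPne : P.Nonempty := ⟨(x₀, y₀), by simp [hP, hxy₀, hnadj₀]⟩
  obtain ⟨⟨u₀, v₀⟩, hu₀mem, hbest₀⟩ := P.exists_max_image
    (fun q => vertexDegree G' q.1 + vertexDegree G' q.2) hPne
  simp only [hP, Finset.mem_filter, Finset.mem_univ, true_and] at hu₀mem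
  have hbest : ∀ x y : V, x ≠ y → ¬G'.Adj x y →
      vertexDegree G' x + vertexDegree G' y
        ≤ vertexDegree G' u₀ + vertexDegree G' v₀ := by
    intro x y hxy hnadj
    exact hbest₀ (x, y) (by simp [hP, hxy, hnadj])
  rcases le_total (vertexDegree G' u₀) (vertexDegree G' v₀) with hle | hle
  · exact final_part Γ G' hm e hmono h hΓG' hsum hbest hu₀mem.1 hu₀mem.2 hle
  · exact final_part Γ G' hm e hmono h hΓG' hsum
      (fun x y hxy hnadj => by have := hbest x y hxy hnadj; omega)
      hu₀mem.1.symm (fun hh => hu₀mem.2 hh.symm) hle
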